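/- Let G be a simple graph on a finite vertex set and let {u,v} be an edge of G. Then G*u*v*u = G*v*u*v, i.e. applying local complementation successively at u, v, u yields the same graph as applying it successively at v, u, v. -/

import Mathlib

set_option linter.unusedSectionVars false

variable {V : Type*} [Fintype V] [DecidableEq V]

/-- Local complementation at a vertex `w`: complement the edges within `N_G(w)`. -/
def SimpleGraph.localComp (G : SimpleGraph V) (w : V) : SimpleGraph V where
  Adj x y := x ≠ y ∧ Xor' (G.Adj x y) (G.Adj x w ∧ G.Adj y w)
  symm := by
    constructor
    intro x y ⟨hne, hx⟩
    refine ⟨hne.symm, ?_⟩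
    have h1 := G.adj_comm x y
    unfold Xor' Xor at hx ⊢
    tauto
  loopless := by constructor; intro x ⟨h, _⟩; exact h rfl

/-- `x ∼_G y` : `x = y` or `{x,y}` is an edge of `G`. -/
def SimpleGraph.nbr (G : SimpleGraph V) (x y : V) : Prop := x = y ∨ G.Adj x y

theorem SimpleGraph.nbr_comm (G : SimpleGraph V) (x y : V) : G.nbr x y ↔ G.nbr y x :=
  or_congr eq_comm (G.adj_comm x y)

private theorem xor_swap_right (a b c : Prop) : Xor' (Xor' a b) c ↔ Xor' (Xor' a c) b := by
  unfold Xor' Xor; tauto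

/-- The pivot `G[uv]` of `G` on an edge `{u,v}`, characterized by
`x ∼_{G[uv]} y ⟺ (x ∼_G y) XOR ((x ∼_G u) ∧ (y ∼_G v)) XOR ((x ∼_G v) ∧ (y ∼_G u))`. -/
def SimpleGraph.pivot (G : SimpleGraph V) (u v : V) : SimpleGraph V where
  Adj x y := x ≠ y ∧
    Xor' (Xor' (G.nbr x y) (G.nbr x u ∧ G.nbr y v)) (G.nbr x v ∧ G.nbr y u)
  symm := by
    constructor
    intro x y ⟨hne, hx⟩
    refine ⟨hne.symm, ?_⟩
    show Xor' (Xor' (G.nbr y x) (G.nbr y u ∧ G.nbr x v)) (G.nbr y v ∧ G.nbr x u)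
    rw [G.nbr_comm y x, and_comm (a := G.nbr y u) (b := G.nbr x v),
      and_comm (a := G.nbr y v) (b := G.nbr x u)]
    exact (xor_swap_right _ _ _).mp hx
  loopless := by constructor; intro x ⟨h, _⟩; exact h rfl

/-- Determinant over GF(2) of the adjacency matrix of the subgraph of `G` induced by `S`. -/
noncomputable def gdet (G : SimpleGraph V) (S : Finset V) : ZMod 2 := by
  classical
  exact Matrix.det (Matrix.of fun i j : S => if G.Adj i j then (1 : ZMod 2) else 0)

/-- Apply a sequence of pivots (left to right). -/
def applyPivots (G : SimpleGraph V) : List (V × V) → SimpleGraph V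
  | [] => G
  | p :: φ => applyPivots (G.pivot p.1 p.2) φ

/-- A sequence of pivots is applicable when each pair is an edge of the graph
obtained by applying all preceding pivots. -/
def PivotsApplicable (G : SimpleGraph V) : List (V × V) → Prop
  | [] => True
  | p :: φ => G.Adj p.1 p.2 ∧ PivotsApplicable (G.pivot p.1 p.2) φ

/-- The support of a sequence of pivots: vertices occurring an odd number of times. -/
def pivotSupport (φ : List (V × V)) : Finset V :=
  Finset.univ.filter fun x => Odd ((φ.flatMap fun p => [p.1, p.2]).count x)

/-- A sequence of pivots is reduced if its pivot vertices are pairwise distinct. -/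
def ReducedSeq (φ : List (V × V)) : Prop := (φ.flatMap fun p => [p.1, p.2]).Nodup

/-- The number of perfect matchings of the subgraph of `G` induced by `S`:
sets of edges of `G` inside `S` such that every vertex of `S` lies in exactly one of them. -/
noncomputable def pmCount (G : SimpleGraph V) (S : Finset V) : ℕ := by
  classical
  exact (Finset.univ.filter fun P : Finset (Sym2 V) =>
    (∀ e ∈ P, e ∈ G.edgeSet ∧ ∀ v ∈ e, v ∈ S) ∧
    ∀ v ∈ S, ∃! e, e ∈ P ∧ v ∈ e).card

set_option maxHeartbeats 4000000 in
/-- For an edge `{u,v}` of a simple graph `G`, `G*u*v*u = G*v*u*v`. -/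
theorem localComp_uvu_eq_vuv (G : SimpleGraph V) (u v : V) (huv : G.Adj u v) :
    ((G.localComp u).localComp v).localComp u
      = ((G.localComp v).localComp u).localComp v := by
  have huu : ¬ G.Adj u u := G.loopless.irrefl u
  have hvv : ¬ G.Adj v v := G.loopless.irrefl v
  have hvu : G.Adj v u := huv.symm
  have hne : u ≠ v := huv.ne
  have hne' : v ≠ u := hne.symm
  ext x y
  rcases eq_or_ne x y with h | hxy
  · simp [SimpleGraph.localComp, h]
  have e1 : G.Adj y x ↔ G.Adj x y := G.adj_comm y x
  have e2 : G.Adj u x ↔ G.Adj x u := G.adj_comm u x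
  have e3 : G.Adj v x ↔ G.Adj x v := G.adj_comm v x
  have e4 : G.Adj u y ↔ G.Adj y u := G.adj_comm u y
  have e5 : G.Adj v y ↔ G.Adj y v := G.adj_comm v y
  have e6 : G.Adj v u ↔ G.Adj u v := G.adj_comm v u
  simp only [SimpleGraph.localComp, Xor']
  by_cases a1 : G.Adj x y <;> by_cases a2 : G.Adj x u <;> by_cases a3 : G.Adj y u <;>
    by_cases a4 : G.Adj x v <;> by_cases a5 : G.Adj y v <;>
    rcases eq_or_ne x u with h1 | h1 <;> rcases eq_or_ne y u with h2 | h2 <;>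
    rcases eq_or_ne x v with h3 | h3 <;> rcases eq_or_ne y v with h4 | h4 <;>
    simp_all
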